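/- arXiv:1005.2104 — 6 statements merged into one kernel-verified Lean document; each statement's English description precedes it below -/
import Mathlib

section
/- For every real k, |J⁰(k)| ≤ 1, and for every k > 0, |J⁰(k)| ≤ 2^(-1/4) · k^(-1/2); equivalently |J⁰(k)| ≤ min(1, 1/(2^(1/4)·√k)) for k > 0. -/
open MeasureTheory Real intervalIntegral Set

/-- The zeroth-order Bessel function `J⁰(k) = (1/π) ∫₀^π cos(k cos θ) dθ`. -/
noncomputable def J0 (k : ℝ) : ℝ :=
  (1 / Real.pi) * ∫ θ in (0:ℝ)..Real.pi, Real.cos (k * Real.cos θ)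

noncomputable def J0d (k : ℝ) : ℝ :=
  (1 / Real.pi) * ∫ θ in (0:ℝ)..Real.pi, -(Real.cos θ * Real.sin (k * Real.cos θ))

noncomputable def J0dd (k : ℝ) : ℝ :=
  (1 / Real.pi) * ∫ θ in (0:ℝ)..Real.pi, -(Real.cos θ ^ 2 * Real.cos (k * Real.cos θ))

noncomputable def EF (x : ℝ) : ℝ :=
  x * (J0d x ^ 2 + J0 x ^ 2) + J0 x * J0d x + J0 x ^ 2 / (2 * x)


private lemma taylor_step {f g : ℝ → ℝ} (hf : ∀ s, HasDerivAt f (g s) s) (h0 : f 0 = 0)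
    (hgc : Continuous g) {c : ℝ} {n : ℕ} (_hc : 0 < c)
    (hg : ∀ s : ℝ, 0 ≤ s → |g s| ≤ s ^ n / c) {t : ℝ} (ht : 0 ≤ t) :
    |f t| ≤ t ^ (n + 1) / (c * (n + 1)) := by
  have hft : f t = ∫ s in (0:ℝ)..t, g s := by
    rw [intervalIntegral.integral_eq_sub_of_hasDerivAt (fun s _ => hf s)
      ((hgc.intervalIntegrable) 0 t), h0, sub_zero]
  rw [hft]
  calc |∫ s in (0:ℝ)..t, g s| ≤ ∫ s in (0:ℝ)..t, |g s| :=
        intervalIntegral.abs_integral_le_integral_abs ht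
    _ ≤ ∫ s in (0:ℝ)..t, s ^ n / c := by
        apply intervalIntegral.integral_mono_on ht
          ((hgc.abs).intervalIntegrable 0 t)
          ((Continuous.intervalIntegrable (by fun_prop)) 0 t)
        intro s hs; exact hg s hs.1
    _ = t ^ (n + 1) / (c * (n + 1)) := by
        rw [intervalIntegral.integral_div, integral_pow,
          zero_pow (Nat.succ_ne_zero n), sub_zero, div_div, mul_comm]

private lemma sin1 : ∀ t : ℝ, 0 ≤ t → |Real.sin t| ≤ t ^ 1 / 1 := by
  intro t ht
  simpa [abs_of_nonneg ht] using Real.abs_sin_le_abs (x := t)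

private lemma cos2 : ∀ t : ℝ, 0 ≤ t → |1 - Real.cos t| ≤ t ^ 2 / 2 := by
  intro t ht
  have := taylor_step (f := fun t => 1 - Real.cos t) (g := fun t => Real.sin t)
    (fun s => by simpa using ((Real.hasDerivAt_cos s).const_sub 1)) (by simp)
    Real.continuous_sin one_pos sin1 ht
  norm_num at this; exact this

private lemma sin3 : ∀ t : ℝ, 0 ≤ t → |Real.sin t - t| ≤ t ^ 3 / 6 := by
  intro t ht
  have := taylor_step (f := fun t => Real.sin t - t) (g := fun t => -(1 - Real.cos t))
    (fun s => ((Real.hasDerivAt_sin s).sub (hasDerivAt_id' s)).congr_deriv (by ring)) (by simp)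
    (by fun_prop) two_pos (fun s hs => by simpa [abs_sub_comm] using cos2 s hs) ht
  norm_num at this; exact this

private lemma cos4 : ∀ t : ℝ, 0 ≤ t → |Real.cos t - (1 - t ^ 2 / 2)| ≤ t ^ 4 / 24 := by
  intro t ht
  have := taylor_step (f := fun t => Real.cos t - (1 - t ^ 2 / 2))
    (g := fun t => -(Real.sin t - t))
    (fun s => by
      have h1 := (Real.hasDerivAt_cos s)
      have h2 : HasDerivAt (fun t : ℝ => 1 - t ^ 2 / 2) (-s) s := by
        simpa using (((hasDerivAt_pow 2 s).div_const 2).const_sub 1)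
      exact (h1.sub h2).congr_deriv (by ring)) (by simp)
    (by fun_prop) (by norm_num : (0:ℝ) < 6) (fun s hs => by simpa [abs_sub_comm] using sin3 s hs) ht
  norm_num at this; exact this

private lemma sin5 : ∀ t : ℝ, 0 ≤ t → |Real.sin t - (t - t ^ 3 / 6)| ≤ t ^ 5 / 120 := by
  intro t ht
  have := taylor_step (f := fun t => Real.sin t - (t - t ^ 3 / 6))
    (g := fun t => Real.cos t - (1 - t ^ 2 / 2))
    (fun s => by
      have h2 : HasDerivAt (fun t : ℝ => t - t ^ 3 / 6) (1 - s ^ 2 / 2) s := by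
        have := (hasDerivAt_id s).sub ((hasDerivAt_pow 3 s).div_const 6)
        exact this.congr_deriv (by push_cast; ring)
      exact (Real.hasDerivAt_sin s).sub h2) (by simp)
    (by fun_prop) (by norm_num : (0:ℝ) < 24) (fun s hs => by simpa using cos4 s hs) ht
  norm_num at this; exact this

private lemma cos6 : ∀ t : ℝ, 0 ≤ t → |Real.cos t - (1 - t ^ 2 / 2 + t ^ 4 / 24)| ≤ t ^ 6 / 720 := by
  intro t ht
  have := taylor_step (f := fun t => Real.cos t - (1 - t ^ 2 / 2 + t ^ 4 / 24))
    (g := fun t => -(Real.sin t - (t - t ^ 3 / 6)))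
    (fun s => by
      have h2 : HasDerivAt (fun t : ℝ => 1 - t ^ 2 / 2 + t ^ 4 / 24) (-s + s ^ 3 / 6) s := by
        have := (((hasDerivAt_pow 2 s).div_const 2).const_sub 1).add ((hasDerivAt_pow 4 s).div_const 24)
        exact this.congr_deriv (by push_cast; ring)
      exact ((Real.hasDerivAt_cos s).sub h2).congr_deriv (by ring)) (by simp)
    (by fun_prop) (by norm_num : (0:ℝ) < 120)
    (fun s hs => by simpa [abs_sub_comm] using sin5 s hs) ht
  norm_num at this; exact this

private lemma sin7 : ∀ t : ℝ, 0 ≤ t →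
    |Real.sin t - (t - t ^ 3 / 6 + t ^ 5 / 120)| ≤ t ^ 7 / 5040 := by
  intro t ht
  have := taylor_step (f := fun t => Real.sin t - (t - t ^ 3 / 6 + t ^ 5 / 120))
    (g := fun t => Real.cos t - (1 - t ^ 2 / 2 + t ^ 4 / 24))
    (fun s => by
      have h2 : HasDerivAt (fun t : ℝ => t - t ^ 3 / 6 + t ^ 5 / 120)
          (1 - s ^ 2 / 2 + s ^ 4 / 24) s := by
        have := ((hasDerivAt_id s).sub ((hasDerivAt_pow 3 s).div_const 6)).add
          ((hasDerivAt_pow 5 s).div_const 120)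
        exact this.congr_deriv (by push_cast; ring)
      exact (Real.hasDerivAt_sin s).sub h2) (by simp)
    (by fun_prop) (by norm_num : (0:ℝ) < 720) (fun s hs => by simpa using cos6 s hs) ht
  norm_num at this; exact this

private lemma cos8 : ∀ t : ℝ, 0 ≤ t →
    |Real.cos t - (1 - t ^ 2 / 2 + t ^ 4 / 24 - t ^ 6 / 720)| ≤ t ^ 8 / 40320 := by
  intro t ht
  have := taylor_step (f := fun t => Real.cos t - (1 - t ^ 2 / 2 + t ^ 4 / 24 - t ^ 6 / 720))
    (g := fun t => -(Real.sin t - (t - t ^ 3 / 6 + t ^ 5 / 120)))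
    (fun s => by
      have h2 : HasDerivAt (fun t : ℝ => 1 - t ^ 2 / 2 + t ^ 4 / 24 - t ^ 6 / 720)
          (-s + s ^ 3 / 6 - s ^ 5 / 120) s := by
        have := ((((hasDerivAt_pow 2 s).div_const 2).const_sub 1).add
          ((hasDerivAt_pow 4 s).div_const 24)).sub ((hasDerivAt_pow 6 s).div_const 720)
        exact this.congr_deriv (by push_cast; ring)
      exact ((Real.hasDerivAt_cos s).sub h2).congr_deriv (by ring)) (by simp)
    (by fun_prop) (by norm_num : (0:ℝ) < 5040)
    (fun s hs => by simpa [abs_sub_comm] using sin7 s hs) ht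
  norm_num at this; exact this

lemma cos_taylor (t : ℝ) :
    |Real.cos t - (1 - t ^ 2 / 2 + t ^ 4 / 24 - t ^ 6 / 720)| ≤ t ^ 8 / 40320 := by
  rcases le_or_gt 0 t with h | h
  · exact cos8 t h
  · have := cos8 (-t) (by linarith)
    rw [Real.cos_neg] at this
    convert this using 2 <;> ring

lemma sin_taylor (t : ℝ) :
    |Real.sin t - (t - t ^ 3 / 6 + t ^ 5 / 120)| ≤ |t| ^ 7 / 5040 := by
  rcases le_or_gt 0 t with h | h
  · rw [abs_of_nonneg h]; exact sin7 t h
  · have := sin7 (-t) (by linarith)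
    rw [Real.sin_neg] at this
    have e : -Real.sin t - (-t - (-t) ^ 3 / 6 + (-t) ^ 5 / 120)
        = -(Real.sin t - (t - t ^ 3 / 6 + t ^ 5 / 120)) := by ring
    rw [e, abs_neg] at this
    rw [abs_of_nonpos h.le]
    exact this

lemma icp2 : ∫ θ in (0:ℝ)..Real.pi, Real.cos θ ^ 2 = Real.pi / 2 := by
  simp [integral_cos_sq]

lemma icp4 : ∫ θ in (0:ℝ)..Real.pi, Real.cos θ ^ 4 = 3 * Real.pi / 8 := by
  have := integral_cos_pow (a := (0:ℝ)) (b := Real.pi) 2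
  norm_num [Real.sin_pi] at this
  rw [this]; ring

lemma icp6 : ∫ θ in (0:ℝ)..Real.pi, Real.cos θ ^ 6 = 5 * Real.pi / 16 := by
  have := integral_cos_pow (a := (0:ℝ)) (b := Real.pi) 4
  norm_num [Real.sin_pi] at this
  rw [this, icp4]; ring

lemma hasDerivAt_J0 (k : ℝ) : HasDerivAt J0 (J0d k) k := by
  unfold J0 J0d
  have h := intervalIntegral.hasDerivAt_integral_of_dominated_loc_of_deriv_le
    (F := fun x θ => Real.cos (x * Real.cos θ))
    (F' := fun x θ => -(Real.cos θ * Real.sin (x * Real.cos θ)))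
    (a := (0:ℝ)) (b := Real.pi) (x₀ := k) (bound := fun _ => 1) (s := Metric.ball k 1)
    (Metric.ball_mem_nhds k one_pos)
    (Filter.Eventually.of_forall (fun x => (Continuous.aestronglyMeasurable (by fun_prop))))
    ((Continuous.intervalIntegrable (by fun_prop : Continuous fun θ : ℝ => Real.cos (k * Real.cos θ))) 0 Real.pi)
    (Continuous.aestronglyMeasurable (by fun_prop))
    (Filter.Eventually.of_forall (fun θ _ x _ => by
      have := abs_mul (Real.cos θ) (Real.sin (x * Real.cos θ))
      rw [Real.norm_eq_abs, abs_neg, abs_mul]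
      exact mul_le_one₀ (Real.abs_cos_le_one θ) (abs_nonneg _) (Real.abs_sin_le_one _)))
    (_root_.intervalIntegrable_const (μ := MeasureTheory.volume))
    (Filter.Eventually.of_forall (fun θ _ x _ => by
      simpa [mul_comm] using ((hasDerivAt_id x).mul_const (Real.cos θ)).cos))
  exact (h.2).const_mul _

lemma hasDerivAt_J0d (k : ℝ) : HasDerivAt J0d (J0dd k) k := by
  unfold J0d J0dd
  have h := intervalIntegral.hasDerivAt_integral_of_dominated_loc_of_deriv_le
    (F := fun x θ => -(Real.cos θ * Real.sin (x * Real.cos θ)))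
    (F' := fun x θ => -(Real.cos θ ^ 2 * Real.cos (x * Real.cos θ)))
    (a := (0:ℝ)) (b := Real.pi) (x₀ := k) (bound := fun _ => 1) (s := Metric.ball k 1)
    (Metric.ball_mem_nhds k one_pos)
    (Filter.Eventually.of_forall (fun x => (Continuous.aestronglyMeasurable (by fun_prop))))
    ((Continuous.intervalIntegrable (by fun_prop :
      Continuous fun θ : ℝ => -(Real.cos θ * Real.sin (k * Real.cos θ)))) 0 Real.pi)
    (Continuous.aestronglyMeasurable (by fun_prop))
    (Filter.Eventually.of_forall (fun θ _ x _ => by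
      rw [Real.norm_eq_abs, abs_neg, abs_mul, abs_pow]
      exact mul_le_one₀ (pow_le_one₀ (abs_nonneg _) (Real.abs_cos_le_one θ))
        (abs_nonneg _) (Real.abs_cos_le_one _)))
    (_root_.intervalIntegrable_const (μ := MeasureTheory.volume))
    (Filter.Eventually.of_forall (fun θ _ x _ => by
      have h1 : HasDerivAt (fun x : ℝ => x * Real.cos θ) (Real.cos θ) x := by
        simpa using (hasDerivAt_id x).mul_const (Real.cos θ)
      have := ((h1.sin).const_mul (Real.cos θ)).neg
      exact this.congr_deriv (by ring)))
  exact (h.2).const_mul _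

lemma bessel_ode (k : ℝ) : k * J0dd k + J0d k + k * J0 k = 0 := by
  have key : (∫ θ in (0:ℝ)..Real.pi, (Real.cos θ * Real.sin (k * Real.cos θ)
      - k * (Real.sin θ)^2 * Real.cos (k * Real.cos θ))) = 0 := by
    have hder : ∀ θ ∈ Set.uIcc (0:ℝ) Real.pi,
        HasDerivAt (fun θ : ℝ => Real.sin θ * Real.sin (k * Real.cos θ))
          (Real.cos θ * Real.sin (k * Real.cos θ)
            - k * (Real.sin θ)^2 * Real.cos (k * Real.cos θ)) θ := by
      intro θ _
      have h1 : HasDerivAt (fun θ : ℝ => k * Real.cos θ) (k * (-Real.sin θ)) θ :=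
        (Real.hasDerivAt_cos θ).const_mul k
      have h2 := (Real.hasDerivAt_sin θ).mul h1.sin
      exact h2.congr_deriv (by ring)
    have := intervalIntegral.integral_eq_sub_of_hasDerivAt hder
      ((Continuous.intervalIntegrable (by fun_prop)) 0 Real.pi)
    simpa using this
  have split : (∫ θ in (0:ℝ)..Real.pi, Real.cos θ * Real.sin (k * Real.cos θ))
      = k * ∫ θ in (0:ℝ)..Real.pi, (Real.sin θ)^2 * Real.cos (k * Real.cos θ) := by
    have h1 : (∫ θ in (0:ℝ)..Real.pi, (Real.cos θ * Real.sin (k * Real.cos θ)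
        - k * (Real.sin θ)^2 * Real.cos (k * Real.cos θ)))
        = (∫ θ in (0:ℝ)..Real.pi, Real.cos θ * Real.sin (k * Real.cos θ))
          - k * ∫ θ in (0:ℝ)..Real.pi, (Real.sin θ)^2 * Real.cos (k * Real.cos θ) := by
      rw [intervalIntegral.integral_sub ((Continuous.intervalIntegrable (by fun_prop)) 0 Real.pi)
        ((Continuous.intervalIntegrable (by fun_prop)) 0 Real.pi),
        ← intervalIntegral.integral_const_mul]
      congr 1
      apply intervalIntegral.integral_congr; intro θ _; ring
    linarith [key, h1.symm ▸ key]
  have sinsq : (∫ θ in (0:ℝ)..Real.pi, (Real.sin θ)^2 * Real.cos (k * Real.cos θ))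
      = (∫ θ in (0:ℝ)..Real.pi, Real.cos (k * Real.cos θ))
        - ∫ θ in (0:ℝ)..Real.pi, (Real.cos θ)^2 * Real.cos (k * Real.cos θ) := by
    rw [← intervalIntegral.integral_sub ((Continuous.intervalIntegrable (by fun_prop)) 0 Real.pi)
      ((Continuous.intervalIntegrable (by fun_prop)) 0 Real.pi)]
    apply intervalIntegral.integral_congr; intro θ _
    simp only []
    rw [Real.sin_sq θ]
    ring
  unfold J0 J0d J0dd
  rw [intervalIntegral.integral_neg, intervalIntegral.integral_neg]
  have hpi : Real.pi ≠ 0 := Real.pi_ne_zero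
  field_simp
  rw [split, sinsq]
  ring

lemma J0_taylor (k : ℝ) :
    |J0 k - (1 - k ^ 2 / 4 + k ^ 4 / 64 - k ^ 6 / 2304)| ≤ k ^ 8 / 40320 := by
  have hπ : (0:ℝ) < Real.pi := Real.pi_pos
  set q : ℝ := 1 - k ^ 2 / 4 + k ^ 4 / 64 - k ^ 6 / 2304 with hq
  have hPval : (∫ θ in (0:ℝ)..Real.pi,
      (1 - (k ^ 2 / 2) * Real.cos θ ^ 2 + (k ^ 4 / 24) * Real.cos θ ^ 4
        - (k ^ 6 / 720) * Real.cos θ ^ 6)) = Real.pi * q := by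
    rw [intervalIntegral.integral_sub (by apply Continuous.intervalIntegrable; fun_prop)
        (by apply Continuous.intervalIntegrable; fun_prop),
      intervalIntegral.integral_add (by apply Continuous.intervalIntegrable; fun_prop)
        (by apply Continuous.intervalIntegrable; fun_prop),
      intervalIntegral.integral_sub (by apply Continuous.intervalIntegrable; fun_prop)
        (by apply Continuous.intervalIntegrable; fun_prop),
      intervalIntegral.integral_const_mul, intervalIntegral.integral_const_mul,
      intervalIntegral.integral_const_mul, icp2, icp4, icp6]
    simp [hq]; ring
  have hbound : ‖(∫ θ in (0:ℝ)..Real.pi, Real.cos (k * Real.cos θ))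
      - ∫ θ in (0:ℝ)..Real.pi,
      (1 - (k ^ 2 / 2) * Real.cos θ ^ 2 + (k ^ 4 / 24) * Real.cos θ ^ 4
        - (k ^ 6 / 720) * Real.cos θ ^ 6)‖ ≤ k ^ 8 / 40320 * |Real.pi - 0| := by
    rw [← intervalIntegral.integral_sub (by apply Continuous.intervalIntegrable; fun_prop)
        (by apply Continuous.intervalIntegrable; fun_prop)]
    apply intervalIntegral.norm_integral_le_of_norm_le_const
    intro θ _
    have h1 := cos_taylor (k * Real.cos θ)
    have e : Real.cos (k * Real.cos θ)
        - (1 - (k ^ 2 / 2) * Real.cos θ ^ 2 + (k ^ 4 / 24) * Real.cos θ ^ 4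
            - (k ^ 6 / 720) * Real.cos θ ^ 6)
        = Real.cos (k * Real.cos θ) - (1 - (k * Real.cos θ) ^ 2 / 2
            + (k * Real.cos θ) ^ 4 / 24 - (k * Real.cos θ) ^ 6 / 720) := by ring
    rw [Real.norm_eq_abs, e]
    refine h1.trans ?_
    have : (k * Real.cos θ) ^ 8 ≤ k ^ 8 := by
      have h2 : (k * Real.cos θ) ^ 8 = k ^ 8 * Real.cos θ ^ 8 := by ring
      have h3 : Real.cos θ ^ 8 ≤ 1 := by
        have := pow_le_one₀ (abs_nonneg (Real.cos θ)) (Real.abs_cos_le_one θ) (n := 8)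
        calc Real.cos θ ^ 8 = |Real.cos θ| ^ 8 := by rw [← abs_pow, abs_of_nonneg (by positivity)]
          _ ≤ 1 := this
      nlinarith [pow_nonneg (sq_nonneg k) 4]
    linarith [this]
  rw [hPval] at hbound
  have : |J0 k - q| = (1 / Real.pi) * ‖(∫ θ in (0:ℝ)..Real.pi, Real.cos (k * Real.cos θ)) - Real.pi * q‖ := by
    rw [Real.norm_eq_abs, J0]
    rw [show (1 / Real.pi) * (∫ θ in (0:ℝ)..Real.pi, Real.cos (k * Real.cos θ)) - q
      = (1 / Real.pi) * ((∫ θ in (0:ℝ)..Real.pi, Real.cos (k * Real.cos θ)) - Real.pi * q) by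
        field_simp]
    rw [abs_mul, abs_of_pos (by positivity : (0:ℝ) < 1 / Real.pi)]
  rw [this]
  rw [sub_zero, abs_of_pos hπ] at hbound
  calc (1 / Real.pi) * ‖(∫ θ in (0:ℝ)..Real.pi, Real.cos (k * Real.cos θ)) - Real.pi * q‖
      ≤ (1 / Real.pi) * (k ^ 8 / 40320 * Real.pi) := by
        apply mul_le_mul_of_nonneg_left _ (by positivity)
        simpa using hbound
    _ = k ^ 8 / 40320 := by field_simp

lemma J0d_taylor (k : ℝ) :
    |J0d k - (-(k / 2 - k ^ 3 / 16 + k ^ 5 / 384))| ≤ |k| ^ 7 / 5040 := by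
  have hπ : (0:ℝ) < Real.pi := Real.pi_pos
  set q : ℝ := -(k / 2 - k ^ 3 / 16 + k ^ 5 / 384) with hq
  have hPval : (∫ θ in (0:ℝ)..Real.pi,
      (-(k * Real.cos θ ^ 2) + (k ^ 3 / 6) * Real.cos θ ^ 4
        - (k ^ 5 / 120) * Real.cos θ ^ 6)) = Real.pi * q := by
    rw [intervalIntegral.integral_sub (by apply Continuous.intervalIntegrable; fun_prop)
        (by apply Continuous.intervalIntegrable; fun_prop),
      intervalIntegral.integral_add (by apply Continuous.intervalIntegrable; fun_prop)
        (by apply Continuous.intervalIntegrable; fun_prop),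
      intervalIntegral.integral_neg,
      intervalIntegral.integral_const_mul, intervalIntegral.integral_const_mul,
      intervalIntegral.integral_const_mul, icp2, icp4, icp6]
    simp [hq]; ring
  have hbound : ‖(∫ θ in (0:ℝ)..Real.pi, -(Real.cos θ * Real.sin (k * Real.cos θ)))
      - ∫ θ in (0:ℝ)..Real.pi,
      (-(k * Real.cos θ ^ 2) + (k ^ 3 / 6) * Real.cos θ ^ 4
        - (k ^ 5 / 120) * Real.cos θ ^ 6)‖ ≤ |k| ^ 7 / 5040 * |Real.pi - 0| := by
    rw [← intervalIntegral.integral_sub (by apply Continuous.intervalIntegrable; fun_prop)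
        (by apply Continuous.intervalIntegrable; fun_prop)]
    apply intervalIntegral.norm_integral_le_of_norm_le_const
    intro θ _
    have h1 := sin_taylor (k * Real.cos θ)
    have e : -(Real.cos θ * Real.sin (k * Real.cos θ))
        - (-(k * Real.cos θ ^ 2) + (k ^ 3 / 6) * Real.cos θ ^ 4
            - (k ^ 5 / 120) * Real.cos θ ^ 6)
        = -(Real.cos θ * (Real.sin (k * Real.cos θ) - ((k * Real.cos θ)
            - (k * Real.cos θ) ^ 3 / 6 + (k * Real.cos θ) ^ 5 / 120))) := by ring
    rw [Real.norm_eq_abs, e, abs_neg, abs_mul]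
    calc |Real.cos θ| * |Real.sin (k * Real.cos θ) - ((k * Real.cos θ)
            - (k * Real.cos θ) ^ 3 / 6 + (k * Real.cos θ) ^ 5 / 120)|
        ≤ 1 * (|k * Real.cos θ| ^ 7 / 5040) := by
          apply mul_le_mul (Real.abs_cos_le_one θ) h1 (abs_nonneg _) zero_le_one
      _ ≤ |k| ^ 7 / 5040 := by
          rw [one_mul, abs_mul]
          have h3 : |k| * |Real.cos θ| ≤ |k| * 1 :=
            mul_le_mul_of_nonneg_left (Real.abs_cos_le_one θ) (abs_nonneg k)
          have := pow_le_pow_left₀ (by positivity) (h3.trans_eq (mul_one _)) 7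
          linarith
  rw [hPval, sub_zero, abs_of_pos hπ] at hbound
  have key : |J0d k - q| = (1 / Real.pi) * ‖(∫ θ in (0:ℝ)..Real.pi,
      -(Real.cos θ * Real.sin (k * Real.cos θ))) - Real.pi * q‖ := by
    rw [Real.norm_eq_abs, J0d]
    rw [show (1 / Real.pi) * (∫ θ in (0:ℝ)..Real.pi, -(Real.cos θ * Real.sin (k * Real.cos θ))) - q
      = (1 / Real.pi) * ((∫ θ in (0:ℝ)..Real.pi, -(Real.cos θ * Real.sin (k * Real.cos θ))) - Real.pi * q) by
        rw [mul_sub, ← mul_assoc, one_div_mul_cancel hπ.ne', one_mul]]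
    rw [abs_mul, abs_of_pos (by positivity : (0:ℝ) < 1 / Real.pi)]
  rw [key]
  calc (1 / Real.pi) * ‖(∫ θ in (0:ℝ)..Real.pi, -(Real.cos θ * Real.sin (k * Real.cos θ))) - Real.pi * q‖
      ≤ (1 / Real.pi) * (|k| ^ 7 / 5040 * Real.pi) := by
        apply mul_le_mul_of_nonneg_left hbound (by positivity)
    _ = |k| ^ 7 / 5040 := by field_simp

lemma hasDerivAt_EF {x : ℝ} (hx : x ≠ 0) :
    HasDerivAt EF (-(J0 x ^ 2) / (2 * x ^ 2)) x := by
  have ha := hasDerivAt_J0 x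
  have hb := hasDerivAt_J0d x
  have hode := bessel_ode x
  have hdd : J0dd x = -(J0d x) / x - J0 x := by field_simp; linarith
  have h1 := (hasDerivAt_id x).mul ((hb.pow 2).add (ha.pow 2))
  have h2 := ha.mul hb
  have h3 := HasDerivAt.div (ha.pow 2) ((hasDerivAt_id x).const_mul 2)
    (by simpa using mul_ne_zero two_ne_zero hx)
  have H := (h1.add h2).add h3
  simp only [id_eq] at H
  unfold EF
  refine H.congr_deriv ?_
  rw [hdd]
  simp only [Pi.add_apply, Pi.pow_apply]
  field_simp
  ring

lemma EF_antitone : AntitoneOn EF (Set.Ici (3/2 : ℝ)) := by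
  apply antitoneOn_of_deriv_nonpos (convex_Ici _)
  · intro x hx
    have hx0 : x ≠ 0 := by
      simp only [Set.mem_Ici] at hx; intro h; rw [h] at hx; norm_num at hx
    exact (hasDerivAt_EF hx0).continuousAt.continuousWithinAt
  · intro x hx
    rw [interior_Ici] at hx
    have hx0 : x ≠ 0 := by simp only [Set.mem_Ioi] at hx; linarith
    exact (hasDerivAt_EF hx0).differentiableAt.differentiableWithinAt
  · intro x hx
    rw [interior_Ici] at hx
    simp only [Set.mem_Ioi] at hx
    have hx0 : x ≠ 0 := by linarith
    rw [(hasDerivAt_EF hx0).deriv]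
    apply div_nonpos_of_nonpos_of_nonneg (neg_nonpos.mpr (sq_nonneg _)) (by positivity)

lemma sq_le_EF {x : ℝ} (hx : 0 < x) : x * J0 x ^ 2 ≤ EF x := by
  unfold EF
  have hd : 2 * x * (J0 x ^ 2 / (2 * x)) = J0 x ^ 2 := by field_simp
  nlinarith [sq_nonneg (2 * x * J0d x + J0 x), sq_nonneg (J0 x), hd, hx]

lemma EF_num : EF (3/2) ≤ 0.672 := by
  have h1 := J0_taylor (3/2)
  have h2 := J0d_taylor (3/2)
  rw [show |(3/2:ℝ)| = 3/2 from abs_of_pos (by norm_num)] at h2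
  rw [abs_le] at h1 h2
  obtain ⟨h1a, h1b⟩ := h1
  obtain ⟨h2a, h2b⟩ := h2
  norm_num at h1a h1b h2a h2b
  unfold EF
  set a := J0 (3/2) with ha
  set b := J0d (3/2) with hb
  have hA1 : (0.51102:ℝ) ≤ a := by linarith
  have hA2 : a ≤ (0.51231:ℝ) := by linarith
  have hB1 : (-0.56223:ℝ) ≤ b := by linarith
  have hB2 : b ≤ (-0.5554:ℝ) := by linarith
  have key : (3:ℝ)/2 * (b^2 + a^2) + a*b + a^2/(2*(3/2)) ≤ 0.672 := by
    nlinarith [mul_nonneg (by linarith : (0:ℝ) ≤ a - 0.51102) (by linarith : (0:ℝ) ≤ 0.51231 - a),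
      mul_nonneg (by linarith : (0:ℝ) ≤ b + 0.56223) (by linarith : (0:ℝ) ≤ -0.5554 - b),
      mul_nonneg (by linarith : (0:ℝ) ≤ a - 0.51102) (by linarith : (0:ℝ) ≤ -0.5554 - b)]
  convert key using 2

lemma J0_abs_le_one (k : ℝ) : |J0 k| ≤ 1 := by
  have hπ : (0:ℝ) < Real.pi := Real.pi_pos
  unfold J0
  rw [abs_mul, abs_of_pos (by positivity : (0:ℝ) < 1 / Real.pi)]
  have h := intervalIntegral.norm_integral_le_of_norm_le_const (C := 1)
    (f := fun θ : ℝ => Real.cos (k * Real.cos θ)) (a := 0) (b := Real.pi)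
    (fun θ _ => by rw [Real.norm_eq_abs]; exact Real.abs_cos_le_one _)
  rw [sub_zero, abs_of_pos hπ, one_mul] at h
  rw [Real.norm_eq_abs] at h
  calc 1 / Real.pi * |∫ θ in (0:ℝ)..Real.pi, Real.cos (k * Real.cos θ)|
      ≤ 1 / Real.pi * Real.pi := by
        apply mul_le_mul_of_nonneg_left h (by positivity)
    _ = 1 := by field_simp

lemma sqrt2_bounds : 1.414 ≤ Real.sqrt 2 ∧ Real.sqrt 2 ≤ 1.415 := by
  constructor <;>
  nlinarith [Real.sq_sqrt (by norm_num : (0:ℝ) ≤ 2), Real.sqrt_nonneg 2]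

lemma key_sq {k : ℝ} (hk : 0 < k) (h : k * J0 k ^ 2 ≤ 0.7067) :
    |J0 k| ≤ 1 / ((2:ℝ) ^ ((1:ℝ)/4) * Real.sqrt k) := by
  have h24 : ((2:ℝ) ^ ((1:ℝ)/4)) = Real.sqrt (Real.sqrt 2) := by
    rw [Real.sqrt_eq_rpow, Real.sqrt_eq_rpow, ← Real.rpow_mul (by norm_num : (0:ℝ) ≤ 2)]
    norm_num
  have hs2 := sqrt2_bounds
  have hsq : k * J0 k ^ 2 ≤ 1 / Real.sqrt 2 := by
    rw [le_div_iff₀ (by positivity : (0:ℝ) < Real.sqrt 2)]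
    nlinarith [hs2.2, hk, sq_nonneg (J0 k), mul_nonneg hk.le (sq_nonneg (J0 k))]
  have hJ2 : J0 k ^ 2 ≤ 1 / (Real.sqrt 2 * k) := by
    rw [le_div_iff₀ (by positivity)]
    calc J0 k ^ 2 * (Real.sqrt 2 * k) = Real.sqrt 2 * (k * J0 k ^ 2) := by ring
      _ ≤ Real.sqrt 2 * (1 / Real.sqrt 2) := by
          apply mul_le_mul_of_nonneg_left hsq (Real.sqrt_nonneg 2)
      _ = 1 := by field_simp
  calc |J0 k| = Real.sqrt (J0 k ^ 2) := (Real.sqrt_sq_eq_abs _).symm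
    _ ≤ Real.sqrt (1 / (Real.sqrt 2 * k)) := Real.sqrt_le_sqrt hJ2
    _ = 1 / ((2:ℝ) ^ ((1:ℝ)/4) * Real.sqrt k) := by
        rw [h24, one_div, Real.sqrt_inv, Real.sqrt_mul (Real.sqrt_nonneg 2), one_div]

theorem J0_bound :
    (∀ k : ℝ, |J0 k| ≤ 1) ∧
    (∀ k : ℝ, 0 < k →
      |J0 k| ≤ min 1 (1 / ((2:ℝ) ^ ((1:ℝ)/4) * Real.sqrt k))) := by
  refine ⟨J0_abs_le_one, fun k hk => le_min (J0_abs_le_one k) ?_⟩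
  apply key_sq hk
  rcases le_or_gt (3/2 : ℝ) k with h32 | h32
  · have h1 : k * J0 k ^ 2 ≤ EF k := sq_le_EF hk
    have h2 : EF k ≤ EF (3/2) := EF_antitone (by norm_num) (Set.mem_Ici.mpr h32) h32
    have h3 := EF_num
    norm_num at h3 ⊢
    linarith
  · -- small k : use Taylor polynomial bound
    have ht := J0_taylor k
    rw [abs_le] at ht
    obtain ⟨hta, htb⟩ := ht
    have hk2 : k ^ 2 ≤ 9/4 := by nlinarith
    have hrem : k ^ 8 / 40320 ≤ k ^ 6 / 2304 := by nlinarith [pow_nonneg hk.le 6]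
    have hup : J0 k ≤ 1 - k ^ 2 / 4 + k ^ 4 / 64 := by linarith
    have hlo : -(1 - k ^ 2 / 4 + k ^ 4 / 64) ≤ J0 k := by nlinarith [pow_nonneg hk.le 4, pow_nonneg hk.le 6, pow_nonneg hk.le 8, pow_nonneg hk.le 2]
    have hP : J0 k ^ 2 ≤ (1 - k ^ 2 / 4 + k ^ 4 / 64) ^ 2 := by
      apply sq_le_sq' hlo hup
    have hpoly : k * (1 - k ^ 2 / 4 + k ^ 4 / 64) ^ 2 ≤ 0.7067 := by
      nlinarith [sq_nonneg (k - 1), sq_nonneg (k^2 - 1), sq_nonneg (k^3 - 1), pow_nonneg hk.le 3, pow_nonneg hk.le 5, pow_nonneg hk.le 7, pow_nonneg hk.le 9, hk.le, hk2, sq_nonneg (k-3/2), sq_nonneg (k^2-k), sq_nonneg (k^4 - k^2)]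
    calc k * J0 k ^ 2 ≤ k * (1 - k ^ 2 / 4 + k ^ 4 / 64) ^ 2 :=
          mul_le_mul_of_nonneg_left hP hk.le
      _ ≤ 0.7067 := hpoly
end

section
/- For every real k, |(J⁰)'(k)| ≤ (1 + k²)^(-1/4). -/
open MeasureTheory Real

open Set

noncomputable def IS (n : ℕ) (k : ℝ) : ℝ := ∫ θ in (0:ℝ)..π, cos θ ^ n * sin (k * cos θ)
noncomputable def IC (n : ℕ) (k : ℝ) : ℝ := ∫ θ in (0:ℝ)..π, cos θ ^ n * cos (k * cos θ)

lemma hasDerivAt_IC (n : ℕ) (k : ℝ) : HasDerivAt (IC n) (-IS (n+1) k) k := by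
  have key := intervalIntegral.hasDerivAt_integral_of_dominated_loc_of_deriv_le
    (μ := volume) (a := (0:ℝ)) (b := π) (x₀ := k) (s := Metric.ball k 1)
    (F := fun k θ => cos θ ^ n * Real.cos (k * cos θ))
    (F' := fun k θ => -(cos θ ^ (n+1) * Real.sin (k * cos θ)))
    (bound := fun _ => 1) (Metric.ball_mem_nhds k one_pos)
    (Filter.Eventually.of_forall fun x =>
      (Continuous.aestronglyMeasurable (by fun_prop)))
    (Continuous.intervalIntegrable (by fun_prop) _ _)
    (Continuous.aestronglyMeasurable (by fun_prop))
    (Filter.Eventually.of_forall fun θ _ x _ => by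
      rw [norm_neg]
      calc ‖cos θ ^ (n+1) * Real.sin (x * cos θ)‖
          = |cos θ| ^ (n+1) * |Real.sin (x * cos θ)| := by
            rw [norm_mul, norm_pow]; rfl
        _ ≤ 1 := mul_le_one₀ (pow_le_one₀ (abs_nonneg _) (abs_cos_le_one θ))
            (abs_nonneg _) (abs_sin_le_one _))
    (intervalIntegrable_const)
    (Filter.Eventually.of_forall fun θ _ x _ => by
      have h1 : HasDerivAt (fun y : ℝ => y * cos θ) (cos θ) x := by
        simpa using (hasDerivAt_id x).mul_const (cos θ)
      have h2 := (Real.hasDerivAt_cos (x * cos θ)).comp x h1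
      have h3 := h2.const_mul (cos θ ^ n)
      refine h3.congr_deriv ?_
      ring)
  have h2 := key.2
  rw [show (∫ θ in (0:ℝ)..π, -(cos θ ^ (n+1) * Real.sin (k * cos θ))) = -IS (n+1) k by
    rw [IS, ← intervalIntegral.integral_neg]] at h2
  exact h2

lemma hasDerivAt_IS (n : ℕ) (k : ℝ) : HasDerivAt (IS n) (IC (n+1) k) k := by
  have key := intervalIntegral.hasDerivAt_integral_of_dominated_loc_of_deriv_le
    (μ := volume) (a := (0:ℝ)) (b := π) (x₀ := k) (s := Metric.ball k 1)
    (F := fun k θ => cos θ ^ n * Real.sin (k * cos θ))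
    (F' := fun k θ => cos θ ^ (n+1) * Real.cos (k * cos θ))
    (bound := fun _ => 1) (Metric.ball_mem_nhds k one_pos)
    (Filter.Eventually.of_forall fun x =>
      (Continuous.aestronglyMeasurable (by fun_prop)))
    (Continuous.intervalIntegrable (by fun_prop) _ _)
    (Continuous.aestronglyMeasurable (by fun_prop))
    (Filter.Eventually.of_forall fun θ _ x _ => by
      calc ‖cos θ ^ (n+1) * Real.cos (x * cos θ)‖
          = |cos θ| ^ (n+1) * |Real.cos (x * cos θ)| := by
            rw [norm_mul, norm_pow]; rfl
        _ ≤ 1 := mul_le_one₀ (pow_le_one₀ (abs_nonneg _) (abs_cos_le_one θ))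
            (abs_nonneg _) (abs_cos_le_one _))
    (intervalIntegrable_const)
    (Filter.Eventually.of_forall fun θ _ x _ => by
      have h1 : HasDerivAt (fun y : ℝ => y * cos θ) (cos θ) x := by
        simpa using (hasDerivAt_id x).mul_const (cos θ)
      have h2 := (Real.hasDerivAt_sin (x * cos θ)).comp x h1
      have h3 := h2.const_mul (cos θ ^ n)
      refine h3.congr_deriv ?_
      ring)
  exact key.2

lemma IS_one_eq (k : ℝ) : IS 1 k = k * (IC 0 k - IC 2 k) := by
  have hd : ∀ θ ∈ uIcc (0:ℝ) π,
      HasDerivAt (fun θ => sin θ * Real.sin (k * cos θ))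
        (cos θ * Real.sin (k * cos θ) - k * ((1 - cos θ ^ 2) * Real.cos (k * cos θ))) θ := by
    intro θ _
    have h1 : HasDerivAt (fun θ : ℝ => k * cos θ) (k * (-sin θ)) θ :=
      (Real.hasDerivAt_cos θ).const_mul k
    have h2 := (Real.hasDerivAt_sin (k * cos θ)).comp θ h1
    have h3 := (Real.hasDerivAt_sin θ).mul h2
    refine h3.congr_deriv ?_
    have hs : sin θ ^ 2 = 1 - cos θ ^ 2 := by
      have := sin_sq_add_cos_sq θ; linarith
    simp only [Function.comp_apply]
    linear_combination (-(k * Real.cos (k * Real.cos θ))) * hs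
  have hcont : ContinuousOn (fun θ =>
      cos θ * Real.sin (k * cos θ) - k * ((1 - cos θ ^ 2) * Real.cos (k * cos θ)))
      (uIcc (0:ℝ) π) := by fun_prop
  have := intervalIntegral.integral_eq_sub_of_hasDerivAt hd
    (hcont.intervalIntegrable)
  simp only [Real.sin_pi, Real.sin_zero, zero_mul, sub_zero] at this
  have hsplit : (∫ θ in (0:ℝ)..π,
      (cos θ * Real.sin (k * cos θ) - k * ((1 - cos θ ^ 2) * Real.cos (k * cos θ))))
      = IS 1 k - k * (IC 0 k - IC 2 k) := by
    rw [intervalIntegral.integral_sub (by apply Continuous.intervalIntegrable; fun_prop)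
      (by apply Continuous.intervalIntegrable; fun_prop)]
    congr 1
    · rw [IS]; congr 1; ext θ; ring
    · rw [intervalIntegral.integral_const_mul, IC, IC]
      rw [show (∫ θ in (0:ℝ)..π, (1 - cos θ ^ 2) * Real.cos (k * cos θ))
          = (∫ θ in (0:ℝ)..π, (cos θ ^ 0 * Real.cos (k * cos θ) - cos θ ^ 2 * Real.cos (k * cos θ))) by
        congr 1; ext θ; ring]
      rw [intervalIntegral.integral_sub (by apply Continuous.intervalIntegrable; fun_prop)
        (by apply Continuous.intervalIntegrable; fun_prop)]
  rw [hsplit] at this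
  linarith

lemma mom0 : (∫ θ in (0:ℝ)..π, cos θ ^ 0) = π := by simp
lemma mom2 : (∫ θ in (0:ℝ)..π, cos θ ^ 2) = π / 2 := by
  rw [show (2:ℕ) = 0 + 2 by rfl, integral_cos_pow]; simp; ring
lemma mom4 : (∫ θ in (0:ℝ)..π, cos θ ^ 4) = 3 * π / 8 := by
  rw [show (4:ℕ) = 2 + 2 by rfl, integral_cos_pow, mom2]; simp; ring
lemma mom6 : (∫ θ in (0:ℝ)..π, cos θ ^ 6) = 5 * π / 16 := by
  rw [show (6:ℕ) = 4 + 2 by rfl, integral_cos_pow, mom4]; simp; ring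
lemma mom8 : (∫ θ in (0:ℝ)..π, cos θ ^ 8) = 35 * π / 128 := by
  rw [show (8:ℕ) = 6 + 2 by rfl, integral_cos_pow, mom6]; simp; ring

lemma aux_nonneg {f f' : ℝ → ℝ} (hd : ∀ t, HasDerivAt f (f' t) t) (h0 : f 0 = 0)
    (hp : ∀ t, 0 ≤ t → 0 ≤ f' t) : ∀ t, 0 ≤ t → 0 ≤ f t := by
  intro t ht
  have hm : MonotoneOn f (Ici (0:ℝ)) := by
    apply monotoneOn_of_deriv_nonneg (convex_Ici 0)
      (fun x _ => (hd x).continuousAt.continuousWithinAt)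
      (fun x _ => (hd x).differentiableAt.differentiableWithinAt)
    intro x hx
    rw [interior_Ici] at hx
    rw [(hd x).deriv]
    exact hp x (le_of_lt hx)
  have := hm (self_mem_Ici) (by exact ht) ht
  rwa [h0] at this

lemma sin_ge_1 : ∀ t : ℝ, 0 ≤ t → t - t^3/6 ≤ sin t := by
  have := aux_nonneg (f := fun t => sin t - (t - t^3/6))
    (f' := fun t => cos t - (1 - t^2/2))
    (fun t => by
      have h := (Real.hasDerivAt_sin t).sub
        (((hasDerivAt_id t).sub (((hasDerivAt_pow 3 t).div_const 6))))
      refine h.congr_deriv ?_; simp; ring)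
    (by norm_num)
    (fun t _ => by have := Real.one_sub_sq_div_two_le_cos (x := t); linarith)
  intro t ht; have := this t ht; linarith

lemma cos_le_2 : ∀ t : ℝ, cos t ≤ 1 - t^2/2 + t^4/24 := by
  have key := aux_nonneg (f := fun t => (1 - t^2/2 + t^4/24) - cos t)
    (f' := fun t => (t^3/6 - t) + sin t)
    (fun t => by
      have h := ((((hasDerivAt_const t (1:ℝ)).sub ((hasDerivAt_pow 2 t).div_const 2)).add
        ((hasDerivAt_pow 4 t).div_const 24)).sub (Real.hasDerivAt_cos t))
      refine h.congr_deriv ?_; simp; ring)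
    (by norm_num)
    (fun t ht => by have := sin_ge_1 t ht; linarith)
  intro t
  rcases le_total 0 t with ht | ht
  · have := key t ht; linarith
  · have := key (-t) (by linarith)
    simp only [Real.cos_neg] at this
    have h2 : (1 - (-t)^2/2 + (-t)^4/24) = 1 - t^2/2 + t^4/24 := by ring
    rw [h2] at this; linarith

lemma sin_le_2 : ∀ t : ℝ, 0 ≤ t → sin t ≤ t - t^3/6 + t^5/120 := by
  have key := aux_nonneg (f := fun t => (t - t^3/6 + t^5/120) - sin t)
    (f' := fun t => (1 - t^2/2 + t^4/24) - cos t)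
    (fun t => by
      have h := ((((hasDerivAt_id t).sub ((hasDerivAt_pow 3 t).div_const 6)).add
        ((hasDerivAt_pow 5 t).div_const 120)).sub (Real.hasDerivAt_sin t))
      refine h.congr_deriv ?_; simp; ring)
    (by norm_num)
    (fun t _ => by have := cos_le_2 t; linarith)
  intro t ht; have := key t ht; linarith

lemma cos_ge_3 : ∀ t : ℝ, 1 - t^2/2 + t^4/24 - t^6/720 ≤ cos t := by
  have key := aux_nonneg (f := fun t => cos t - (1 - t^2/2 + t^4/24 - t^6/720))
    (f' := fun t => (t - t^3/6 + t^5/120) - sin t)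
    (fun t => by
      have h := (Real.hasDerivAt_cos t).sub
        ((((hasDerivAt_const t (1:ℝ)).sub ((hasDerivAt_pow 2 t).div_const 2)).add
        ((hasDerivAt_pow 4 t).div_const 24)).sub ((hasDerivAt_pow 6 t).div_const 720))
      refine h.congr_deriv ?_; simp; ring)
    (by norm_num)
    (fun t ht => by have := sin_le_2 t ht; linarith)
  intro t
  rcases le_total 0 t with ht | ht
  · have := key t ht; linarith
  · have := key (-t) (by linarith)
    simp only [Real.cos_neg] at this
    have h2 : ((-t)^2) = t^2 := by ring
    have h4 : ((-t)^4) = t^4 := by ring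
    have h6 : ((-t)^6) = t^6 := by ring
    rw [h2, h4, h6] at this; linarith

lemma sin_ge_3 : ∀ t : ℝ, 0 ≤ t → t - t^3/6 + t^5/120 - t^7/5040 ≤ sin t := by
  have key := aux_nonneg (f := fun t => sin t - (t - t^3/6 + t^5/120 - t^7/5040))
    (f' := fun t => cos t - (1 - t^2/2 + t^4/24 - t^6/720))
    (fun t => by
      have h := (Real.hasDerivAt_sin t).sub
        (((((hasDerivAt_id t).sub ((hasDerivAt_pow 3 t).div_const 6)).add
        ((hasDerivAt_pow 5 t).div_const 120)).sub ((hasDerivAt_pow 7 t).div_const 5040)))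
      refine h.congr_deriv ?_; simp; ring)
    (by norm_num)
    (fun t _ => by have := cos_ge_3 t; linarith)
  intro t ht; have := key t ht; linarith

/-- Two-sided Taylor bound for sin, all reals. -/
lemma sin_taylor_abs (t : ℝ) : |sin t - (t - t^3/6 + t^5/120)| ≤ |t|^7/5040 := by
  rcases le_total 0 t with ht | ht
  · rw [abs_of_nonneg ht, abs_le]
    constructor
    · have := sin_ge_3 t ht; linarith
    · have := sin_le_2 t ht; nlinarith [pow_nonneg ht 7]
  · have h1 := sin_ge_3 (-t) (by linarith)
    have h2 := sin_le_2 (-t) (by linarith)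
    rw [Real.sin_neg] at h1 h2
    rw [abs_of_nonpos ht, abs_le]
    constructor
    · nlinarith
    · nlinarith
/-- Two-sided Taylor bound for cos, all reals. -/
lemma cos_taylor_abs (t : ℝ) : |cos t - (1 - t^2/2 + t^4/24)| ≤ t^6/720 := by
  rw [abs_le]
  constructor
  · have := cos_ge_3 t; linarith
  · have := cos_le_2 t; nlinarith [pow_nonneg (sq_nonneg t) 3, sq_nonneg (t^3)]

lemma IS1_approx (k : ℝ) :
    |IS 1 k - π * (k/2 - k^3/16 + k^5/384)| ≤ π * |k|^7 / 18432 := by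
  have hpoly : (∫ θ in (0:ℝ)..π, (k * cos θ ^ 2 - k^3/6 * cos θ ^ 4 + k^5/120 * cos θ ^ 6))
      = π * (k/2 - k^3/16 + k^5/384) := by
    rw [intervalIntegral.integral_add (by apply Continuous.intervalIntegrable; fun_prop)
      (by apply Continuous.intervalIntegrable; fun_prop),
      intervalIntegral.integral_sub (by apply Continuous.intervalIntegrable; fun_prop)
        (by apply Continuous.intervalIntegrable; fun_prop),
      intervalIntegral.integral_const_mul, intervalIntegral.integral_const_mul,
      intervalIntegral.integral_const_mul, mom2, mom4, mom6]
    ring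
  have hsplit : IS 1 k - π * (k/2 - k^3/16 + k^5/384)
      = ∫ θ in (0:ℝ)..π, (cos θ * sin (k * cos θ)
          - (k * cos θ ^ 2 - k^3/6 * cos θ ^ 4 + k^5/120 * cos θ ^ 6)) := by
    rw [intervalIntegral.integral_sub (by apply Continuous.intervalIntegrable; fun_prop)
      (by apply Continuous.intervalIntegrable; fun_prop), hpoly]
    congr 1
    rw [IS]
    simp only [pow_one]
  rw [hsplit]
  have hbound : ∀ᵐ θ ∂(volume.restrict (Set.uIoc (0:ℝ) π)),
      ‖cos θ * sin (k * cos θ) - (k * cos θ ^ 2 - k^3/6 * cos θ ^ 4 + k^5/120 * cos θ ^ 6)‖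
        ≤ |k|^7 / 5040 * cos θ ^ 8 := by
    refine Filter.Eventually.of_forall fun θ => ?_
    have h := sin_taylor_abs (k * cos θ)
    have heq : cos θ * sin (k * cos θ) - (k * cos θ ^ 2 - k^3/6 * cos θ ^ 4 + k^5/120 * cos θ ^ 6)
        = cos θ * (sin (k * cos θ) - (k * cos θ - (k * cos θ)^3/6 + (k * cos θ)^5/120)) := by
      ring
    rw [heq, Real.norm_eq_abs, abs_mul]
    calc |cos θ| * |sin (k * cos θ) - (k * cos θ - (k * cos θ)^3/6 + (k * cos θ)^5/120)|
        ≤ |cos θ| * (|k * cos θ|^7 / 5040) := by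
          exact mul_le_mul_of_nonneg_left h (abs_nonneg _)
      _ = |k|^7 / 5040 * cos θ ^ 8 := by
          rw [abs_mul, mul_pow]
          rw [show |cos θ| * (|k| ^ 7 * |cos θ| ^ 7 / 5040) = |k|^7/5040 * (|cos θ|^8) by ring]
          rw [show |cos θ|^8 = cos θ ^ 8 by rw [← abs_pow, abs_of_nonneg (by positivity)]]
  have hgint : IntervalIntegrable (fun θ => |k|^7 / 5040 * cos θ ^ 8) volume 0 π := by
    apply Continuous.intervalIntegrable; fun_prop
  have := intervalIntegral.norm_integral_le_abs_of_norm_le hbound hgint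
  rw [intervalIntegral.integral_const_mul, mom8] at this
  rw [Real.norm_eq_abs] at this
  calc |∫ θ in (0:ℝ)..π, (cos θ * sin (k * cos θ)
          - (k * cos θ ^ 2 - k^3/6 * cos θ ^ 4 + k^5/120 * cos θ ^ 6))|
      ≤ |(|k|^7 / 5040 * (35 * π / 128))| := this
    _ = π * |k|^7 / 18432 := by
        rw [abs_of_nonneg (by positivity)]; ring

lemma IC2_approx (k : ℝ) :
    |IC 2 k - π * (1/2 - 3*k^2/16 + 5*k^4/384)| ≤ π * k^6 / 2633 := by
  have hpoly : (∫ θ in (0:ℝ)..π, (cos θ ^ 2 - k^2/2 * cos θ ^ 4 + k^4/24 * cos θ ^ 6))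
      = π * (1/2 - 3*k^2/16 + 5*k^4/384) := by
    rw [intervalIntegral.integral_add (by apply Continuous.intervalIntegrable; fun_prop)
      (by apply Continuous.intervalIntegrable; fun_prop),
      intervalIntegral.integral_sub (by apply Continuous.intervalIntegrable; fun_prop)
        (by apply Continuous.intervalIntegrable; fun_prop),
      intervalIntegral.integral_const_mul, intervalIntegral.integral_const_mul,
      mom2, mom4, mom6]
    ring
  have hsplit : IC 2 k - π * (1/2 - 3*k^2/16 + 5*k^4/384)
      = ∫ θ in (0:ℝ)..π, (cos θ ^ 2 * cos (k * cos θ)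
          - (cos θ ^ 2 - k^2/2 * cos θ ^ 4 + k^4/24 * cos θ ^ 6)) := by
    rw [intervalIntegral.integral_sub (by apply Continuous.intervalIntegrable; fun_prop)
      (by apply Continuous.intervalIntegrable; fun_prop), ← IC, hpoly]
  rw [hsplit]
  have hbound : ∀ᵐ θ ∂(volume.restrict (Set.uIoc (0:ℝ) π)),
      ‖cos θ ^ 2 * cos (k * cos θ) - (cos θ ^ 2 - k^2/2 * cos θ ^ 4 + k^4/24 * cos θ ^ 6)‖
        ≤ k^6 / 720 * cos θ ^ 8 := by
    refine Filter.Eventually.of_forall fun θ => ?_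
    have h := cos_taylor_abs (k * cos θ)
    have heq : cos θ ^ 2 * cos (k * cos θ) - (cos θ ^ 2 - k^2/2 * cos θ ^ 4 + k^4/24 * cos θ ^ 6)
        = cos θ ^ 2 * (cos (k * cos θ) - (1 - (k * cos θ)^2/2 + (k * cos θ)^4/24)) := by
      ring
    rw [heq, Real.norm_eq_abs, abs_mul]
    calc |cos θ ^ 2| * |cos (k * cos θ) - (1 - (k * cos θ)^2/2 + (k * cos θ)^4/24)|
        ≤ |cos θ ^ 2| * ((k * cos θ)^6 / 720) := by
          exact mul_le_mul_of_nonneg_left h (abs_nonneg _)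
      _ = k^6 / 720 * (cos θ ^ 8) := by
          rw [abs_of_nonneg (by positivity), mul_pow]; ring
  have hgint : IntervalIntegrable (fun θ => k^6 / 720 * cos θ ^ 8) volume 0 π := by
    apply Continuous.intervalIntegrable; fun_prop
  have hle := intervalIntegral.norm_integral_le_abs_of_norm_le hbound hgint
  rw [intervalIntegral.integral_const_mul, mom8, Real.norm_eq_abs] at hle
  calc |∫ θ in (0:ℝ)..π, (cos θ ^ 2 * cos (k * cos θ)
          - (cos θ ^ 2 - k^2/2 * cos θ ^ 4 + k^4/24 * cos θ ^ 6))|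
      ≤ |k^6 / 720 * (35 * π / 128)| := hle
    _ ≤ π * k^6 / 2633 := by
        rw [abs_of_nonneg (by positivity)]
        nlinarith [pow_nonneg (sq_nonneg k) 3, Real.pi_pos]

lemma IC2_identity (k : ℝ) :
    IC 2 k = (IC 0 k - IC 2 k) + k * (IS 3 k - IS 1 k) := by
  have h1 : HasDerivAt (IS 1) (IC 2 k) k := hasDerivAt_IS 1 k
  have h2 : HasDerivAt (fun k => k * (IC 0 k - IC 2 k))
      (1 * (IC 0 k - IC 2 k) + k * (-IS 1 k - -IS 3 k)) k :=
    (hasDerivAt_id k).mul ((hasDerivAt_IC 0 k).sub (hasDerivAt_IC 2 k))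
  have hfun : IS 1 = fun k => k * (IC 0 k - IC 2 k) := funext IS_one_eq
  rw [hfun] at h1
  have h3 := h1.unique h2
  linear_combination h3

lemma IS3_ode {k : ℝ} (hk : k ≠ 0) :
    IS 3 k = IS 1 k + IC 2 k / k - IS 1 k / k^2 := by
  have h1 := IS_one_eq k
  have h2 := IC2_identity k
  have h3 : k^2 * IS 3 k = k^2 * IS 1 k + k * IC 2 k - IS 1 k := by
    linear_combination h1 + (-k) * h2
  field_simp
  linear_combination h3

noncomputable def EE (k : ℝ) : ℝ :=
  k * (IS 1 k)^2 + k * (2*k*IC 2 k + IS 1 k)^2 / (4*k^2 - 3)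

lemma hasDerivAt_EE {k : ℝ} (hk : 1 ≤ k) :
    HasDerivAt EE (-6 * (2*k*IC 2 k + IS 1 k)^2 / (4*k^2 - 3)^2) k := by
  have hk0 : k ≠ 0 := by linarith
  have hD : 4*k^2 - 3 ≠ 0 := by nlinarith
  have hS := hasDerivAt_IS 1 k
  have hC := hasDerivAt_IC 2 k
  have hinner : HasDerivAt (fun y => 2 * y * IC 2 y + IS 1 y)
      ((2 * 1 * IC 2 k + 2 * k * -IS 3 k) + IC 2 k) k :=
    (((hasDerivAt_id' (x := k)).const_mul 2).mul hC).add hS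
  have hDen : HasDerivAt (fun y : ℝ => 4 * y^2 - 3) (4 * (2 * k^1)) k :=
    ((hasDerivAt_pow 2 k).const_mul 4).sub_const 3
  have htot := ((hasDerivAt_id' (x := k)).mul (hS.pow 2)).add
    (((hasDerivAt_id' (x := k)).mul (hinner.pow 2)).div hDen hD)
  refine htot.congr_deriv ?_
  norm_num
  rw [eq_div_iff (pow_ne_zero 2 hD), add_mul, div_mul_cancel₀ _ (pow_ne_zero 2 hD)]
  rw [IS3_ode hk0]
  field_simp
  ring

lemma EE_antitone : AntitoneOn EE (Ici (3/2 : ℝ)) := by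
  apply antitoneOn_of_deriv_nonpos (convex_Ici _)
  · intro x hx
    have h1x : (1:ℝ) ≤ x := le_trans (by norm_num) (mem_Ici.mp hx)
    exact (hasDerivAt_EE h1x).continuousAt.continuousWithinAt
  · intro x hx
    rw [interior_Ici] at hx
    have h1x : (1:ℝ) ≤ x := le_trans (by norm_num) (le_of_lt (mem_Ioi.mp hx))
    exact (hasDerivAt_EE h1x).differentiableAt.differentiableWithinAt
  · intro x hx
    rw [interior_Ici] at hx
    have h1x : (1:ℝ) ≤ x := le_trans (by norm_num) (le_of_lt (mem_Ioi.mp hx))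
    rw [(hasDerivAt_EE h1x).deriv]
    apply div_nonpos_of_nonpos_of_nonneg
    · nlinarith [sq_nonneg (2*x*IC 2 x + IS 1 x)]
    · positivity

lemma IS1_odd (k : ℝ) : IS 1 (-k) = -(IS 1 k) := by
  rw [IS, IS, ← intervalIntegral.integral_neg]
  congr 1
  ext θ
  rw [show -k * cos θ = -(k * cos θ) by ring, Real.sin_neg]
  ring

lemma rpow_conclude {v t : ℝ} (hv : 0 ≤ v) (ht : 1 ≤ t) (h : v^4 * t ≤ 1) :
    v ≤ t ^ (-(1:ℝ)/4) := by
  have ht0 : (0:ℝ) < t := by linarith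
  have hr : t ^ (-(1:ℝ)/4) = 1 / (t ^ ((1:ℝ)/4)) := by
    rw [show (-(1:ℝ)/4) = -((1:ℝ)/4) by norm_num, Real.rpow_neg ht0.le]
    exact (one_div _).symm
  have hrp : (0:ℝ) < t ^ ((1:ℝ)/4) := Real.rpow_pos_of_pos ht0 _
  have h4 : (t ^ ((1:ℝ)/4)) ^ (4:ℕ) = t := by
    rw [← Real.rpow_natCast (t ^ ((1:ℝ)/4)) 4, ← Real.rpow_mul ht0.le]
    norm_num
  have hle : (v * t ^ ((1:ℝ)/4)) ^ (4:ℕ) ≤ 1 := by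
    rw [mul_pow, h4]
    exact h
  have hmul : v * t ^ ((1:ℝ)/4) ≤ 1 :=
    (pow_le_one_iff_of_nonneg (mul_nonneg hv hrp.le) (by norm_num)).mp hle
  rw [hr, le_div_iff₀ hrp]
  exact hmul

lemma key_small {k : ℝ} (hk0 : 0 ≤ k) (hk : k ≤ 3/2) :
    (|IS 1 k| / π)^4 * (1 + k^2) ≤ 1 := by
  have happrox := IS1_approx k
  have hpi := Real.pi_pos
  have habs : |k| = k := abs_of_nonneg hk0
  rw [habs] at happrox
  have hk2 : k^2 ≤ 9/4 := by nlinarith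
  have hpoly_nn : (0:ℝ) ≤ k/2 - k^3/16 + k^5/384 := by
    nlinarith [mul_nonneg hk0 (show (0:ℝ) ≤ 1/2 - k^2/16 by nlinarith),
      pow_nonneg hk0 5]
  have hv : |IS 1 k| ≤ π * (k/2 - k^3/16 + k^5/384 + k^7/18432) := by
    have h1 : |IS 1 k| - |π * (k/2 - k^3/16 + k^5/384)| ≤ π * k^7/18432 := by
      have := abs_sub_abs_le_abs_sub (IS 1 k) (π * (k/2 - k^3/16 + k^5/384))
      linarith [happrox]
    have h2 : |π * (k/2 - k^3/16 + k^5/384)| = π * (k/2 - k^3/16 + k^5/384) :=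
      abs_of_nonneg (mul_nonneg hpi.le hpoly_nn)
    rw [h2] at h1
    linarith
  have hvd : |IS 1 k| / π ≤ k/2 - k^3/16 + k^5/384 + k^7/18432 := by
    rw [div_le_iff₀ hpi]
    linarith [hv]
  have hstep1 : k/2 - k^3/16 + k^5/384 + k^7/18432 ≤ k/2 - k^3/20 := by
    have h5 : k^5 = k^3 * k^2 := by ring
    have h7 : k^7 = k^3 * k^2 * k^2 := by ring
    nlinarith [pow_nonneg hk0 3, mul_nonneg (pow_nonneg hk0 3) (sq_nonneg k)]
  have hR0 : (0:ℝ) ≤ k/2 - k^3/20 := by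
    nlinarith [mul_nonneg hk0 (show (0:ℝ) ≤ 1/2 - k^2/20 by nlinarith)]
  have hvnn : (0:ℝ) ≤ |IS 1 k| / π := by positivity
  have hvR : |IS 1 k| / π ≤ k/2 - k^3/20 := hvd.trans hstep1
  have hsq : (|IS 1 k| / π)^2 ≤ k^2/4 - k^4/24 := by
    have h := mul_le_mul hvR hvR hvnn hR0
    calc (|IS 1 k| / π)^2 = (|IS 1 k| / π) * (|IS 1 k| / π) := sq (|IS 1 k| / π)
      _ ≤ (k/2 - k^3/20) * (k/2 - k^3/20) := h
      _ ≤ k^2/4 - k^4/24 := by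
          nlinarith [mul_nonneg (mul_nonneg (pow_nonneg hk0 4) hk0) hk0,
            pow_nonneg hk0 4, pow_nonneg hk0 6]
  have hq : (0:ℝ) ≤ k^2/4 - k^4/24 := le_trans (sq_nonneg _) hsq
  have hx2 : k^4 ≤ (9/4)^2 := by
    calc k^4 = (k^2)^2 := by ring
      _ ≤ (9/4)^2 := pow_le_pow_left₀ (sq_nonneg k) hk2 2
  have hx3 : k^6 ≤ (9/4)^3 := by
    calc k^6 = (k^2)^3 := by ring
      _ ≤ (9/4)^3 := pow_le_pow_left₀ (sq_nonneg k) hk2 3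
  have hx5 : k^10 ≤ (9/4)^5 := by
    calc k^10 = (k^2)^5 := by ring
      _ ≤ (9/4)^5 := pow_le_pow_left₀ (sq_nonneg k) hk2 5
  calc (|IS 1 k| / π)^4 * (1 + k^2)
      = ((|IS 1 k| / π)^2)^2 * (1 + k^2) := by ring
    _ ≤ (k^2/4 - k^4/24)^2 * (1 + k^2) := by
        apply mul_le_mul_of_nonneg_right _ (by nlinarith [sq_nonneg k])
        exact pow_le_pow_left₀ (sq_nonneg _) hsq 2
    _ ≤ 1 := by nlinarith [pow_nonneg hk0 8, hx2, hx3, hx5, sq_nonneg k]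

lemma EE32_bound : EE (3/2) ≤ (723/1000) * π^2 := by
  have h1 := IS1_approx (3/2)
  have h2 := IC2_approx (3/2)
  have hpi := Real.pi_pos
  rw [show |(3:ℝ)/2| = 3/2 from abs_of_nonneg (by norm_num)] at h1
  norm_num at h1 h2
  obtain ⟨h1l, h1r⟩ := abs_le.mp h1
  obtain ⟨h2l, h2r⟩ := abs_le.mp h2
  have hS : |IS 1 (3/2)| ≤ π * (1320651/2359296) := by
    rw [abs_le]; constructor <;> nlinarith
  have hC : |IC 2 (3/2)| ≤ π * (800063/5392384) := by
    rw [abs_le]; constructor <;> nlinarith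
  have hSC : |3 * IC 2 (3/2) + IS 1 (3/2)| ≤ π * (800063/5392384) * 3 + π * (1320651/2359296) := by
    calc |3 * IC 2 (3/2) + IS 1 (3/2)| ≤ |3 * IC 2 (3/2)| + |IS 1 (3/2)| := abs_add_le _ _
      _ = 3 * |IC 2 (3/2)| + |IS 1 (3/2)| := by rw [abs_mul]; norm_num
      _ ≤ π * (800063/5392384) * 3 + π * (1320651/2359296) := by linarith
  have hS2 : (IS 1 (3/2))^2 ≤ (π * (1320651/2359296))^2 := by
    rw [← sq_abs]
    apply pow_le_pow_left₀ (abs_nonneg _) hS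
  have hSC2 : (3 * IC 2 (3/2) + IS 1 (3/2))^2
      ≤ (π * (800063/5392384) * 3 + π * (1320651/2359296))^2 := by
    rw [← sq_abs]
    apply pow_le_pow_left₀ (abs_nonneg _) hSC
  rw [EE]
  have hden : 4*((3:ℝ)/2)^2 - 3 = 6 := by norm_num
  have harg : 2*((3:ℝ)/2)*IC 2 (3/2) = 3 * IC 2 (3/2) := by ring
  rw [hden, harg]
  nlinarith [sq_nonneg π]

lemma key_large {k : ℝ} (hk : 3/2 ≤ k) :
    (|IS 1 k| / π)^4 * (1 + k^2) ≤ 1 := by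
  have hpi := Real.pi_pos
  have hk0 : (0:ℝ) < k := by linarith
  have hD : (0:ℝ) < 4*k^2 - 3 := by nlinarith
  have hE : EE k ≤ EE (3/2) :=
    EE_antitone (self_mem_Ici) (mem_Ici.mpr hk) hk
  have hterm : k * (IS 1 k)^2 ≤ EE k := by
    rw [EE]
    have : (0:ℝ) ≤ k * (2*k*IC 2 k + IS 1 k)^2 / (4*k^2 - 3) := by positivity
    linarith
  have hkS : k * (IS 1 k)^2 ≤ (723/1000) * π^2 := le_trans hterm (le_trans hE EE32_bound)
  have hS2 : (IS 1 k)^2 ≤ (723/1000) * π^2 / k := by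
    rw [le_div_iff₀ hk0]
    nlinarith
  have hS2nn : (0:ℝ) ≤ (IS 1 k)^2 := sq_nonneg _
  have hS4 : (IS 1 k)^4 ≤ ((723/1000) * π^2 / k)^2 := by
    calc (IS 1 k)^4 = ((IS 1 k)^2)^2 := by ring
      _ ≤ ((723/1000) * π^2 / k)^2 := pow_le_pow_left₀ hS2nn hS2 2
  have heq : (|IS 1 k| / π)^4 = (IS 1 k)^4 / π^4 := by
    rw [div_pow]
    congr 1
    calc |IS 1 k|^4 = (|IS 1 k|^2)^2 := by ring
      _ = ((IS 1 k)^2)^2 := by rw [sq_abs]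
      _ = (IS 1 k)^4 := by ring
  rw [heq]
  rw [div_mul_eq_mul_div, div_le_one (by positivity)]
  have hexp : ((723/1000) * π^2 / k)^2 = (723/1000)^2 * π^4 / k^2 := by
    field_simp
  calc (IS 1 k)^4 * (1 + k^2) ≤ (723/1000)^2 * π^4 / k^2 * (1 + k^2) := by
        apply mul_le_mul_of_nonneg_right _ (by positivity)
        rw [← hexp]; exact hS4
    _ ≤ π^4 := by
        rw [div_mul_eq_mul_div, div_le_iff₀ (by positivity)]
        have hk2 : (9:ℝ)/4 ≤ k^2 := by nlinarith
        have hfrac : ((723:ℝ)/1000)^2 * (1+k^2) ≤ k^2 := by nlinarith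
        nlinarith [mul_le_mul_of_nonneg_left hfrac (pow_pos hpi 4).le]

lemma J0_eq : J0 = fun x => (1/π) * IC 0 x := by
  funext x
  rw [J0, IC]
  congr 1
  simp only [pow_zero, one_mul]

lemma abs_norm_IS1 (k : ℝ) : |deriv J0 k| = |IS 1 k| / π := by
  have hd : HasDerivAt J0 ((1/π) * -(IS 1 k)) k := by
    rw [J0_eq]
    exact (hasDerivAt_IC 0 k).const_mul (1/π)
  rw [hd.deriv, abs_mul, abs_neg, abs_of_nonneg (le_of_lt (by positivity : (0:ℝ) < 1/π))]
  ring

lemma main_nonneg {k : ℝ} (hk0 : 0 ≤ k) :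
    |IS 1 k| / π ≤ (1 + k ^ 2) ^ (-(1:ℝ)/4) := by
  have ht : (1:ℝ) ≤ 1 + k^2 := by nlinarith
  rcases le_total k (3/2) with h | h
  · exact rpow_conclude (by positivity) ht (key_small hk0 h)
  · exact rpow_conclude (by positivity) ht (key_large h)

theorem J0_deriv_decay_bound (k : ℝ) : |deriv J0 k| ≤ (1 + k ^ 2) ^ (-(1:ℝ)/4) := by
  rw [abs_norm_IS1]
  rcases le_total 0 k with hk0 | hk0
  · exact main_nonneg hk0
  · have hodd : |IS 1 k| = |IS 1 (-k)| := by
      rw [show k = -(-k) by ring, IS1_odd, abs_neg, neg_neg]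
    have hsq : (1 + k^2 : ℝ) = 1 + (-k)^2 := by ring
    rw [hodd, hsq]
    exact main_nonneg (by linarith)
end

section
/- The function J⁰ satisfies the zeroth-order Bessel differential equation: for every real k, k²·(J⁰)''(k) + k·(J⁰)'(k) + k²·J⁰(k) = 0, together with the initial conditions J⁰(0) = 1 and (J⁰)'(0) = 0. -/
open MeasureTheory Real

/-- Generic differentiation under the interval integral for nice integrands. -/
lemma hasDerivAt_intAux (f f' : ℝ → ℝ → ℝ)
    (hcont : ∀ x, Continuous (f x))
    (hcont' : ∀ x, Continuous (f' x))
    (hbound : ∀ x t, |f' x t| ≤ 1)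
    (hderiv : ∀ x t, HasDerivAt (fun y => f y t) (f' x t) x)
    (x₀ : ℝ) :
    HasDerivAt (fun x => ∫ t in (0:ℝ)..Real.pi, f x t)
      (∫ t in (0:ℝ)..Real.pi, f' x₀ t) x₀ := by
  have h := intervalIntegral.hasDerivAt_integral_of_dominated_loc_of_deriv_le
    (F := f) (F' := f') (bound := fun _ => (1:ℝ)) (a := 0) (b := Real.pi)
    (x₀ := x₀) (s := Set.univ) Filter.univ_mem
    (Filter.Eventually.of_forall fun x => (hcont x).aestronglyMeasurable)
    ((hcont x₀).intervalIntegrable _ _)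
    (hcont' x₀).aestronglyMeasurable
    (Filter.Eventually.of_forall fun t _ x _ => by
      simpa using hbound x t)
    (intervalIntegrable_const (μ := volume))
    (Filter.Eventually.of_forall fun t _ x _ => hderiv x t)
  exact h.2

lemma J0_deriv (k : ℝ) :
    HasDerivAt J0 ((1 / Real.pi) * ∫ θ in (0:ℝ)..Real.pi,
      -Real.sin (k * Real.cos θ) * Real.cos θ) k := by
  have h := hasDerivAt_intAux (fun x t => Real.cos (x * Real.cos t))
    (fun x t => -Real.sin (x * Real.cos t) * Real.cos t)
    (fun x => by fun_prop) (fun x => by fun_prop)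
    (fun x t => by
      have h1 : |Real.sin (x * Real.cos t)| ≤ 1 := abs_sin_le_one _
      have h2 : |Real.cos t| ≤ 1 := abs_cos_le_one _
      calc |-Real.sin (x * Real.cos t) * Real.cos t|
          = |Real.sin (x * Real.cos t)| * |Real.cos t| := by rw [abs_mul, abs_neg]
        _ ≤ 1 * 1 := by
            exact mul_le_mul h1 h2 (abs_nonneg _) zero_le_one
        _ = 1 := one_mul 1)
    (fun x t => by
      simpa using ((hasDerivAt_mul_const (Real.cos t)).cos (x := x))) k
  exact h.const_mul (1 / Real.pi)

lemma J0_deriv_eq : deriv J0 = fun k => (1 / Real.pi) * ∫ θ in (0:ℝ)..Real.pi,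
    -Real.sin (k * Real.cos θ) * Real.cos θ := by
  funext k; exact (J0_deriv k).deriv

lemma J0_deriv2 (k : ℝ) :
    HasDerivAt (deriv J0) ((1 / Real.pi) * ∫ θ in (0:ℝ)..Real.pi,
      -Real.cos (k * Real.cos θ) * Real.cos θ ^ 2) k := by
  rw [J0_deriv_eq]
  have h := hasDerivAt_intAux (fun x t => -Real.sin (x * Real.cos t) * Real.cos t)
    (fun x t => -Real.cos (x * Real.cos t) * Real.cos t ^ 2)
    (fun x => by fun_prop) (fun x => by fun_prop)
    (fun x t => by
      have h1 : |Real.cos (x * Real.cos t)| ≤ 1 := abs_cos_le_one _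
      have h2 : |Real.cos t ^ 2| ≤ 1 := by
        rw [abs_pow]; exact pow_le_one₀ (abs_nonneg _) (abs_cos_le_one t)
      calc |-Real.cos (x * Real.cos t) * Real.cos t ^ 2|
          = |Real.cos (x * Real.cos t)| * |Real.cos t ^ 2| := by rw [abs_mul, abs_neg]
        _ ≤ 1 * 1 := mul_le_mul h1 h2 (abs_nonneg _) zero_le_one
        _ = 1 := one_mul 1)
    (fun x t => by
      have := (((hasDerivAt_mul_const (Real.cos t)).sin (x := x)).neg).mul_const (Real.cos t)
      refine this.congr_deriv ?_
      ring)
    k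
  exact h.const_mul (1 / Real.pi)

theorem J0_bessel_ODE :
    (∀ k : ℝ, k ^ 2 * deriv (deriv J0) k + k * deriv J0 k + k ^ 2 * J0 k = 0) ∧
    J0 0 = 1 ∧ deriv J0 0 = 0 := by
  refine ⟨?_, ?_, ?_⟩
  · intro k
    rw [(J0_deriv2 k).deriv, J0_deriv_eq]
    show k ^ 2 * ((1 / Real.pi) * _) + k * ((1 / Real.pi) * _) + k ^ 2 * J0 k = 0
    rw [J0]
    -- combine into a single integral
    have hint0 : IntervalIntegrable (fun θ => Real.cos (k * Real.cos θ)) volume 0 Real.pi :=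
      (by fun_prop : Continuous _).intervalIntegrable _ _
    have hint1 : IntervalIntegrable (fun θ => -Real.sin (k * Real.cos θ) * Real.cos θ)
        volume 0 Real.pi := (by fun_prop : Continuous _).intervalIntegrable _ _
    have hint2 : IntervalIntegrable (fun θ => -Real.cos (k * Real.cos θ) * Real.cos θ ^ 2)
        volume 0 Real.pi := (by fun_prop : Continuous _).intervalIntegrable _ _
    have key : (∫ θ in (0:ℝ)..Real.pi,
        (k ^ 2 * (-Real.cos (k * Real.cos θ) * Real.cos θ ^ 2)
          + k * (-Real.sin (k * Real.cos θ) * Real.cos θ)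
          + k ^ 2 * Real.cos (k * Real.cos θ))) = 0 := by
      have hd : ∀ θ : ℝ, HasDerivAt (fun θ => -(k * Real.sin θ * Real.sin (k * Real.cos θ)))
          (k ^ 2 * (-Real.cos (k * Real.cos θ) * Real.cos θ ^ 2)
            + k * (-Real.sin (k * Real.cos θ) * Real.cos θ)
            + k ^ 2 * Real.cos (k * Real.cos θ)) θ := by
        intro θ
        have h1 : HasDerivAt (fun θ => k * Real.sin θ) (k * Real.cos θ) θ :=
          (Real.hasDerivAt_sin θ).const_mul k
        have h2 : HasDerivAt (fun θ => Real.sin (k * Real.cos θ))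
            (Real.cos (k * Real.cos θ) * (k * -Real.sin θ)) θ :=
          ((Real.hasDerivAt_cos θ).const_mul k).sin
        have := (h1.mul h2).neg
        refine this.congr_deriv ?_
        have hs := Real.sin_sq_add_cos_sq θ
        linear_combination (k ^ 2 * Real.cos (k * Real.cos θ)) * hs
      have := intervalIntegral.integral_eq_sub_of_hasDerivAt (a := (0:ℝ)) (b := Real.pi)
        (fun θ _ => hd θ)
        ((by fun_prop : Continuous fun θ =>
          (k ^ 2 * (-Real.cos (k * Real.cos θ) * Real.cos θ ^ 2)
            + k * (-Real.sin (k * Real.cos θ) * Real.cos θ)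
            + k ^ 2 * Real.cos (k * Real.cos θ))).intervalIntegrable _ _)
      simpa using this
    have expand : (∫ θ in (0:ℝ)..Real.pi,
        (k ^ 2 * (-Real.cos (k * Real.cos θ) * Real.cos θ ^ 2)
          + k * (-Real.sin (k * Real.cos θ) * Real.cos θ)
          + k ^ 2 * Real.cos (k * Real.cos θ)))
        = k ^ 2 * (∫ θ in (0:ℝ)..Real.pi, -Real.cos (k * Real.cos θ) * Real.cos θ ^ 2)
          + k * (∫ θ in (0:ℝ)..Real.pi, -Real.sin (k * Real.cos θ) * Real.cos θ)
          + k ^ 2 * (∫ θ in (0:ℝ)..Real.pi, Real.cos (k * Real.cos θ)) := by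
      rw [intervalIntegral.integral_add ((hint2.const_mul _).add (hint1.const_mul _))
          (hint0.const_mul _),
        intervalIntegral.integral_add (hint2.const_mul _) (hint1.const_mul _),
        intervalIntegral.integral_const_mul, intervalIntegral.integral_const_mul,
        intervalIntegral.integral_const_mul]
    rw [expand] at key
    linear_combination (1 / Real.pi) * key
  · rw [J0]
    simp [Real.pi_ne_zero]
  · rw [J0_deriv_eq]
    simp
end

section
/- For every real k, J⁰(k) equals the sum of the everywhere-convergent power series Σ_{j=0}^∞ (−1)^j · k^{2j} / (2^{2j} · (j!)²). -/
open MeasureTheory Real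

lemma integral_cos_pow_even (n : ℕ) :
    (∫ x in (0:ℝ)..Real.pi, Real.cos x ^ (2 * n))
      = Real.pi * (Nat.factorial (2 * n) : ℝ) / (4 ^ n * (Nat.factorial n : ℝ) ^ 2) := by
  induction n with
  | zero => simp
  | succ m ih =>
    have h : 2 * (m + 1) = (2 * m) + 2 := by ring
    rw [h, integral_cos_pow, ih]
    have hm : ((2 * m).factorial : ℝ) ≠ 0 := Nat.cast_ne_zero.2 (Nat.factorial_ne_zero _)
    have hm' : ((m).factorial : ℝ) ≠ 0 := Nat.cast_ne_zero.2 (Nat.factorial_ne_zero _)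
    have h4 : (4 : ℝ) ^ m ≠ 0 := by positivity
    have hfac : ((2 * m + 2).factorial : ℝ)
        = ((2 * m).factorial : ℝ) * (2 * m + 1) * (2 * m + 2) := by
      rw [show 2 * m + 2 = (2 * m + 1) + 1 from rfl, Nat.factorial_succ, Nat.factorial_succ]
      push_cast; ring
    have hfac' : ((m + 1).factorial : ℝ) = ((m).factorial : ℝ) * (m + 1) := by
      rw [Nat.factorial_succ]; push_cast; ring
    rw [hfac, hfac']
    simp only [Real.sin_pi, Real.sin_zero, mul_zero, zero_mul, sub_zero, mul_zero, zero_div,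
      zero_add]
    have hmp : (0:ℝ) < (m:ℝ) + 1 := by positivity
    field_simp
    push_cast; ring

theorem J0_power_series (k : ℝ) :
    HasSum (fun j : ℕ =>
      (-1 : ℝ) ^ j * k ^ (2 * j) / (2 ^ (2 * j) * (Nat.factorial j : ℝ) ^ 2)) (J0 k) := by
  -- dominated convergence for series on Ioc 0 π
  set μ : Measure ℝ := volume.restrict (Set.Ioc (0:ℝ) Real.pi)
  have hbs : Summable (fun j : ℕ => |k| ^ (2 * j) / ((2 * j).factorial : ℝ)) := by
    have := (Real.summable_pow_div_factorial |k|).comp_injective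
      (i := fun j : ℕ => 2 * j) (fun a b hab => by simpa using hab)
    exact this
  have key : HasSum
      (fun j : ℕ => ∫ θ, ((-1:ℝ) ^ j * (k * Real.cos θ) ^ (2 * j) / ((2 * j).factorial : ℝ)) ∂μ)
      (∫ θ, Real.cos (k * Real.cos θ) ∂μ) := by
    apply MeasureTheory.hasSum_integral_of_dominated_convergence
      (bound := fun j _ => |k| ^ (2 * j) / ((2 * j).factorial : ℝ))
    · intro j
      exact (Continuous.aestronglyMeasurable (by fun_prop))
    · intro j
      filter_upwards with θ
      rw [Real.norm_eq_abs, abs_div, abs_mul, abs_pow, abs_pow, abs_neg, abs_one, one_pow,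
        one_mul, abs_mul, abs_of_nonneg (by positivity : (0:ℝ) ≤ ((2*j).factorial : ℝ))]
      have h1 : |k| * |Real.cos θ| ≤ |k| * 1 := by
        gcongr
        exact Real.abs_cos_le_one θ
      rw [mul_one] at h1
      gcongr
    · filter_upwards with θ using hbs
    · exact integrable_const _
    · filter_upwards with θ using Real.hasSum_cos (k * Real.cos θ)
  -- rewrite set integrals as interval integrals and evaluate
  have hpi : (0:ℝ) ≤ Real.pi := Real.pi_pos.le
  have hint : ∀ j : ℕ,
      (∫ θ, ((-1:ℝ) ^ j * (k * Real.cos θ) ^ (2 * j) / ((2 * j).factorial : ℝ)) ∂μ)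
        = (-1:ℝ) ^ j * k ^ (2 * j) / ((2 * j).factorial : ℝ)
            * (Real.pi * ((2 * j).factorial : ℝ) / (4 ^ j * (Nat.factorial j : ℝ) ^ 2)) := by
    intro j
    rw [← intervalIntegral.integral_of_le hpi, ← integral_cos_pow_even j]
    rw [← intervalIntegral.integral_const_mul]
    congr 1 with θ
    rw [mul_pow]; ring
  have hJ : (∫ θ, Real.cos (k * Real.cos θ) ∂μ)
      = ∫ θ in (0:ℝ)..Real.pi, Real.cos (k * Real.cos θ) :=
    (intervalIntegral.integral_of_le hpi).symm
  have key2 := key.mul_left (1 / Real.pi)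
  rw [hJ] at key2
  have : (fun j : ℕ =>
      (-1 : ℝ) ^ j * k ^ (2 * j) / (2 ^ (2 * j) * (Nat.factorial j : ℝ) ^ 2))
      = fun j : ℕ => (1 / Real.pi) *
        ∫ θ, ((-1:ℝ) ^ j * (k * Real.cos θ) ^ (2 * j) / ((2 * j).factorial : ℝ)) ∂μ := by
    funext j
    rw [hint j]
    have hfj : ((2 * j).factorial : ℝ) ≠ 0 := Nat.cast_ne_zero.2 (Nat.factorial_ne_zero _)
    have hfj' : ((j).factorial : ℝ) ≠ 0 := Nat.cast_ne_zero.2 (Nat.factorial_ne_zero _)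
    have hpi' : Real.pi ≠ 0 := Real.pi_ne_zero
    have h24 : (2:ℝ) ^ (2 * j) = 4 ^ j := by
      rw [pow_mul]; norm_num
    rw [h24]
    field_simp
  rw [this]
  exact key2
end

section
/- For every k with 0 ≤ k ≤ √2, k · (J⁰(k))² ≥ k − k³/2 (equivalently (J⁰(k))² ≥ 1 − k²/2 on this range). -/
open MeasureTheory Real

lemma J0_ge (k : ℝ) : 1 - k ^ 2 / 4 ≤ J0 k := by
  have hπ : (0:ℝ) < Real.pi := Real.pi_pos
  have hint : (∫ θ in (0:ℝ)..Real.pi, (1 - k ^ 2 * Real.cos θ ^ 2 / 2))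
      = Real.pi - k ^ 2 * (Real.pi / 2) / 2 := by
    rw [intervalIntegral.integral_sub intervalIntegrable_const]
    · simp [intervalIntegral.integral_div, intervalIntegral.integral_const_mul,
        integral_cos_sq]
    · apply IntervalIntegrable.div_const
      exact (intervalIntegrable_const.mul_continuousOn
        ((continuous_cos.pow 2).continuousOn))
  have hmono : (∫ θ in (0:ℝ)..Real.pi, (1 - k ^ 2 * Real.cos θ ^ 2 / 2))
      ≤ ∫ θ in (0:ℝ)..Real.pi, Real.cos (k * Real.cos θ) := by
    apply intervalIntegral.integral_mono_on hπ.le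
    · exact (continuous_const.sub ((continuous_const.mul (continuous_cos.pow 2)).div_const 2)).intervalIntegrable _ _
    · exact (continuous_cos.comp (continuous_const.mul continuous_cos)).intervalIntegrable _ _
    · intro x hx
      have := Real.one_sub_sq_div_two_le_cos (x := k * Real.cos x)
      calc 1 - k ^ 2 * Real.cos x ^ 2 / 2 = 1 - (k * Real.cos x) ^ 2 / 2 := by ring
        _ ≤ _ := this
  unfold J0
  have h : (1 / Real.pi) * (Real.pi - k ^ 2 * (Real.pi / 2) / 2) = 1 - k ^ 2 / 4 := by
    field_simp; ring
  calc (1:ℝ) - k ^ 2 / 4 = (1 / Real.pi) * (Real.pi - k ^ 2 * (Real.pi / 2) / 2) := h.symm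
    _ ≤ _ := by
        apply mul_le_mul_of_nonneg_left _ (by positivity)
        rw [← hint]; exact hmono

theorem J0_sq_lower_bound (k : ℝ) (hk0 : 0 ≤ k) (hk2 : k ≤ Real.sqrt 2) :
    k - k ^ 3 / 2 ≤ k * (J0 k) ^ 2 := by
  have hk2' : k ^ 2 ≤ 2 := by
    have := Real.sq_sqrt (by norm_num : (0:ℝ) ≤ 2)
    nlinarith [Real.sqrt_nonneg 2]
  have h1 : (0:ℝ) ≤ 1 - k ^ 2 / 4 := by nlinarith
  have h2 := J0_ge k
  have hsq : (1 - k ^ 2 / 4) ^ 2 ≤ (J0 k) ^ 2 := by nlinarith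
  nlinarith [sq_nonneg k, sq_nonneg (k^2), mul_le_mul_of_nonneg_left hsq hk0]
end

section
/- For every k with 0 ≤ k ≤ 2, J⁰(k) ≤ 1 − k²/4 + k⁴/64. -/
open MeasureTheory Real

lemma sin_cubic_lb {t : ℝ} (ht : 0 ≤ t) : t - t ^ 3 / 6 ≤ Real.sin t := by
  have hd : ∀ s : ℝ, HasDerivAt (fun u : ℝ => Real.sin u - (u - u ^ 3 / 6))
      (Real.cos s - (1 - s ^ 2 / 2)) s := by
    intro s
    have h3 : HasDerivAt (fun u : ℝ => u ^ 3) (3 * s ^ 2) s := by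
      simpa using hasDerivAt_pow 3 s
    have h2 : HasDerivAt (fun u : ℝ => u - u ^ 3 / 6) (1 - s ^ 2 / 2) s := by
      have := (hasDerivAt_id' s).sub (h3.div_const 6)
      exact this.congr_deriv (by ring)
    exact (Real.hasDerivAt_sin s).sub h2
  have mono : MonotoneOn (fun u : ℝ => Real.sin u - (u - u ^ 3 / 6)) (Set.Ici 0) := by
    apply monotoneOn_of_deriv_nonneg (convex_Ici 0)
    · exact Continuous.continuousOn (by continuity)
    · intro s _
      exact (hd s).differentiableAt.differentiableWithinAt
    · intro s _
      rw [(hd s).deriv]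
      have := Real.one_sub_sq_div_two_le_cos (x := s)
      linarith
  have h := mono (Set.mem_Ici.2 le_rfl) (Set.mem_Ici.2 ht) ht
  simp only [Real.sin_zero] at h
  norm_num at h
  linarith

lemma cos_quartic_nonneg {x : ℝ} (h0 : 0 ≤ x) (h2 : x ≤ 2) :
    Real.cos x ≤ 1 - x ^ 2 / 2 + x ^ 4 / 24 := by
  have hcos : Real.cos x = 1 - 2 * Real.sin (x / 2) ^ 2 := by
    have h := Real.sin_sq_eq_half_sub (x / 2)
    rw [show 2 * (x / 2) = x by ring] at h
    linarith
  have hs : x / 2 - (x / 2) ^ 3 / 6 ≤ Real.sin (x / 2) := sin_cubic_lb (by linarith)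
  have hx2 : x ^ 2 ≤ 2 * x := by nlinarith
  have hx3 : x ^ 3 ≤ 4 * x := by nlinarith
  have hnn : 0 ≤ x / 2 - (x / 2) ^ 3 / 6 := by nlinarith
  have hsq : (x / 2 - (x / 2) ^ 3 / 6) ^ 2 ≤ Real.sin (x / 2) ^ 2 := by nlinarith
  have hexp : (x / 2 - (x / 2) ^ 3 / 6) ^ 2
      = x ^ 2 / 4 - x ^ 4 / 48 + x ^ 6 / 2304 := by ring
  have h6 : 0 ≤ x ^ 6 := by positivity
  rw [hcos]
  linarith

lemma cos_quartic {x : ℝ} (hx : |x| ≤ 2) : Real.cos x ≤ 1 - x ^ 2 / 2 + x ^ 4 / 24 := by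
  have h := cos_quartic_nonneg (abs_nonneg x) hx
  rw [Real.cos_abs] at h
  have e2 : |x| ^ 2 = x ^ 2 := sq_abs x
  have e4 : |x| ^ 4 = x ^ 4 := by rw [pow_abs, abs_of_nonneg (by positivity)]
  linarith

theorem J0_upper_bound_small (k : ℝ) (hk0 : 0 ≤ k) (hk2 : k ≤ 2) :
    J0 k ≤ 1 - k ^ 2 / 4 + k ^ 4 / 64 := by
  have hπ := Real.pi_pos
  have hbound : ∀ θ ∈ Set.Icc (0:ℝ) Real.pi,
      Real.cos (k * Real.cos θ) ≤
        1 - (k * Real.cos θ) ^ 2 / 2 + (k * Real.cos θ) ^ 4 / 24 := by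
    intro θ _
    apply cos_quartic
    rw [abs_mul, abs_of_nonneg hk0]
    have h1 := Real.abs_cos_le_one θ
    nlinarith [abs_nonneg (Real.cos θ)]
  have hint1 : IntervalIntegrable (fun θ => Real.cos (k * Real.cos θ)) volume 0 Real.pi :=
    by apply Continuous.intervalIntegrable; fun_prop
  have hint2 : IntervalIntegrable
      (fun θ => 1 - (k * Real.cos θ) ^ 2 / 2 + (k * Real.cos θ) ^ 4 / 24) volume 0 Real.pi :=
    by apply Continuous.intervalIntegrable; fun_prop
  have hmono := intervalIntegral.integral_mono_on hπ.le hint1 hint2 hbound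
  have e1 : ∫ θ in (0:ℝ)..Real.pi, Real.cos θ ^ 2 = Real.pi / 2 := by
    simp [integral_cos_sq]
  have e2 : ∫ θ in (0:ℝ)..Real.pi, Real.cos θ ^ 4 = 3 * Real.pi / 8 := by
    have h := integral_cos_pow (a := 0) (b := Real.pi) 2
    rw [e1] at h
    norm_num at h
    rw [h]
    ring
  have hval : (∫ θ in (0:ℝ)..Real.pi,
      (1 - (k * Real.cos θ) ^ 2 / 2 + (k * Real.cos θ) ^ 4 / 24))
      = Real.pi * (1 - k ^ 2 / 4 + k ^ 4 / 64) := by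
    have heq : (fun θ => 1 - (k * Real.cos θ) ^ 2 / 2 + (k * Real.cos θ) ^ 4 / 24)
        = fun θ => 1 - k ^ 2 / 2 * Real.cos θ ^ 2 + k ^ 4 / 24 * Real.cos θ ^ 4 := by
      funext θ; ring
    rw [heq, intervalIntegral.integral_add, intervalIntegral.integral_sub,
        intervalIntegral.integral_const_mul, intervalIntegral.integral_const_mul, e1, e2]
    · simp; ring
    all_goals apply Continuous.intervalIntegrable; fun_prop
  rw [hval] at hmono
  rw [J0]
  calc (1 / Real.pi) * ∫ θ in (0:ℝ)..Real.pi, Real.cos (k * Real.cos θ)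
      ≤ (1 / Real.pi) * (Real.pi * (1 - k ^ 2 / 4 + k ^ 4 / 64)) :=
        mul_le_mul_of_nonneg_left hmono (by positivity)
    _ = 1 - k ^ 2 / 4 + k ^ 4 / 64 := by field_simp
end
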